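/- Let F : [0,∞) → ℝ be three times differentiable and satisfy (d/dt + λ)[(d/dt + η)² + ν] F(t) ≤ 0 for all t ≥ 0, where λ > 0 and ν ≤ 0 is a constant. Let φ be the solution of [(d/dt + η)² + ν] φ(t) = C₀ e^{-λ t} with φ(0) = F(0), φ'(0) = F'(0), where C₀ = F''(0) + 2η F'(0) + (η² + ν) F(0). Then F(t) ≤ φ(t) for all t ≥ 0. -/

import Mathlib

/-- Gronwall-type lemma: if `f 0 ≤ 0` and `f' ≤ a f` on `[0,∞)`, then `f ≤ 0` there. -/
lemma gron_aux (f : ℝ → ℝ) (a : ℝ) (hf : Differentiable ℝ f) (h0 : f 0 ≤ 0)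
    (h : ∀ t ≥ (0 : ℝ), deriv f t ≤ a * f t) : ∀ t ≥ (0 : ℝ), f t ≤ 0 := by
  intro t ht
  set g : ℝ → ℝ := fun x => Real.exp (-a * x) * f x with hg
  have hder : ∀ x, HasDerivAt g (Real.exp (-a * x) * (deriv f x - a * f x)) x := by
    intro x
    have h1 : HasDerivAt (fun x : ℝ => Real.exp (-a * x)) (Real.exp (-a * x) * (-a)) x := by
      have := ((hasDerivAt_id x).const_mul (-a)).exp
      simpa using this
    have h2 := h1.fun_mul (hf x).hasDerivAt
    refine h2.congr_deriv ?_
    ring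
  have hgd : Differentiable ℝ g := fun x => (hder x).differentiableAt
  have hanti : AntitoneOn g (Set.Ici (0 : ℝ)) := by
    apply antitoneOn_of_deriv_nonpos (convex_Ici 0) hgd.continuous.continuousOn
      (hgd.differentiableOn)
    intro x hx
    rw [interior_Ici] at hx
    rw [(hder x).deriv]
    have hx0 : (0 : ℝ) ≤ x := le_of_lt hx
    have := h x hx0
    have hexp := (Real.exp_pos (-a * x)).le
    nlinarith
  have hle : g t ≤ g 0 := hanti Set.self_mem_Ici ht ht
  have hg0 : g 0 ≤ 0 := by
    simp only [hg, mul_zero, Real.exp_zero, one_mul]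
    simpa using h0
  have hgt : Real.exp (-a * t) * f t ≤ 0 := le_trans hle hg0
  nlinarith [Real.exp_pos (-a * t)]

theorem stmt0 (F φ : ℝ → ℝ) (lam η ν C₀ : ℝ)
    (hlam : 0 < lam) (hν : ν ≤ 0)
    (hF : ContDiff ℝ 3 F) (hφ : ContDiff ℝ 2 φ)
    (hineq : ∀ t ≥ (0 : ℝ),
      iteratedDeriv 3 F t + (lam + 2 * η) * iteratedDeriv 2 F t
        + (η ^ 2 + ν + 2 * lam * η) * deriv F t + lam * (η ^ 2 + ν) * F t ≤ 0)
    (hC₀ : C₀ = iteratedDeriv 2 F 0 + 2 * η * deriv F 0 + (η ^ 2 + ν) * F 0)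
    (hφode : ∀ t ≥ (0 : ℝ),
      iteratedDeriv 2 φ t + 2 * η * deriv φ t + (η ^ 2 + ν) * φ t
        = C₀ * Real.exp (-lam * t))
    (hφ0 : φ 0 = F 0) (hφ'0 : deriv φ 0 = deriv F 0) :
    ∀ t ≥ (0 : ℝ), F t ≤ φ t := by
  -- basic differentiability facts
  have hF0 : Differentiable ℝ F := hF.differentiable (by norm_num)
  have hF1 : Differentiable ℝ (deriv F) := by
    have := hF.differentiable_iteratedDeriv 1 (by norm_num)
    simpa [iteratedDeriv_one] using this
  have hF2 : Differentiable ℝ (iteratedDeriv 2 F) :=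
    hF.differentiable_iteratedDeriv 2 (by norm_num)
  have hφ0d : Differentiable ℝ φ := hφ.differentiable (by norm_num)
  have hφ1 : Differentiable ℝ (deriv φ) := by
    have := hφ.differentiable_iteratedDeriv 1 (by norm_num)
    simpa [iteratedDeriv_one] using this
  have hdF1 : ∀ x, HasDerivAt F (deriv F x) x := fun x => (hF0 x).hasDerivAt
  have hdF2 : ∀ x, HasDerivAt (deriv F) (iteratedDeriv 2 F x) x := by
    intro x
    have : deriv (deriv F) x = iteratedDeriv 2 F x := by
      rw [show (2 : ℕ) = 1 + 1 from rfl, iteratedDeriv_succ, iteratedDeriv_one]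
    rw [← this]; exact (hF1 x).hasDerivAt
  have hdF3 : ∀ x, HasDerivAt (iteratedDeriv 2 F) (iteratedDeriv 3 F x) x := by
    intro x
    have h3 : iteratedDeriv 3 F = deriv (iteratedDeriv 2 F) := by
      rw [show (3 : ℕ) = 2 + 1 from rfl, iteratedDeriv_succ]
    rw [show iteratedDeriv 3 F x = deriv (iteratedDeriv 2 F) x from by rw [h3]]
    exact (hF2 x).hasDerivAt
  have hdφ1 : ∀ x, HasDerivAt φ (deriv φ x) x := fun x => (hφ0d x).hasDerivAt
  have hdφ2 : ∀ x, HasDerivAt (deriv φ) (iteratedDeriv 2 φ x) x := by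
    intro x
    have : deriv (deriv φ) x = iteratedDeriv 2 φ x := by
      rw [show (2 : ℕ) = 1 + 1 from rfl, iteratedDeriv_succ, iteratedDeriv_one]
    rw [← this]; exact (hφ1 x).hasDerivAt
  -- Step 1: H t := F'' + 2ηF' + (η²+ν)F - C₀ e^{-λt} satisfies H' ≤ -λ H on [0,∞), H 0 = 0
  set H : ℝ → ℝ := fun t =>
    iteratedDeriv 2 F t + 2 * η * deriv F t + (η ^ 2 + ν) * F t - C₀ * Real.exp (-lam * t)
    with hHdef
  have hHder : ∀ x, HasDerivAt H
      (iteratedDeriv 3 F x + 2 * η * iteratedDeriv 2 F x + (η ^ 2 + ν) * deriv F x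
        + lam * C₀ * Real.exp (-lam * x)) x := by
    intro x
    have hexp : HasDerivAt (fun x : ℝ => C₀ * Real.exp (-lam * x))
        (C₀ * (Real.exp (-lam * x) * (-lam))) x := by
      have := (((hasDerivAt_id x).const_mul (-lam)).exp).const_mul C₀
      simpa using this
    have := (((hdF3 x).fun_add ((hdF2 x).const_mul (2 * η))).fun_add
      ((hdF1 x).const_mul (η ^ 2 + ν))).fun_sub hexp
    refine this.congr_deriv ?_
    ring
  have hHd : Differentiable ℝ H := fun x => (hHder x).differentiableAt
  have hH0 : H 0 = 0 := by
    simp only [hHdef, mul_zero, Real.exp_zero, mul_one, hC₀]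
    ring
  have hHle : ∀ t ≥ (0 : ℝ), H t ≤ 0 := by
    apply gron_aux H (-lam) hHd (le_of_eq hH0)
    intro t ht
    rw [(hHder t).deriv]
    have := hineq t ht
    simp only [hHdef]
    nlinarith [this]
  -- Step 2: u t := e^{ηt} (F t - φ t)
  set u : ℝ → ℝ := fun t => Real.exp (η * t) * (F t - φ t) with hudef
  have hexpder : ∀ x, HasDerivAt (fun x : ℝ => Real.exp (η * x))
      (Real.exp (η * x) * η) x := by
    intro x
    have := ((hasDerivAt_id x).const_mul η).exp
    simpa using this
  have huder : ∀ x, HasDerivAt u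
      (Real.exp (η * x) * (η * (F x - φ x) + (deriv F x - deriv φ x))) x := by
    intro x
    have := (hexpder x).fun_mul ((hdF1 x).fun_sub (hdφ1 x))
    refine this.congr_deriv ?_
    ring
  have hu'eq : ∀ x, deriv u x
      = Real.exp (η * x) * (η * (F x - φ x) + (deriv F x - deriv φ x)) :=
    fun x => (huder x).deriv
  have hu''der : ∀ x, HasDerivAt (deriv u)
      (Real.exp (η * x) * (η ^ 2 * (F x - φ x) + 2 * η * (deriv F x - deriv φ x)
        + (iteratedDeriv 2 F x - iteratedDeriv 2 φ x))) x := by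
    intro x
    have h1 : HasDerivAt (fun x => Real.exp (η * x) * (η * (F x - φ x)
        + (deriv F x - deriv φ x)))
        (Real.exp (η * x) * η * (η * (F x - φ x) + (deriv F x - deriv φ x))
          + Real.exp (η * x) * (η * (deriv F x - deriv φ x)
            + (iteratedDeriv 2 F x - iteratedDeriv 2 φ x))) x := by
      exact (hexpder x).mul ((((hdF1 x).sub (hdφ1 x)).const_mul η).add
        ((hdF2 x).sub (hdφ2 x)))
    have h2 : HasDerivAt (deriv u)
        (Real.exp (η * x) * η * (η * (F x - φ x) + (deriv F x - deriv φ x))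
          + Real.exp (η * x) * (η * (deriv F x - deriv φ x)
            + (iteratedDeriv 2 F x - iteratedDeriv 2 φ x))) x := by
      exact h1.congr_of_eventuallyEq (Filter.Eventually.of_forall fun y => hu'eq y)
    convert h2 using 1
    ring
  have hud : Differentiable ℝ u := fun x => (huder x).differentiableAt
  have hu'd : Differentiable ℝ (deriv u) := fun x => (hu''der x).differentiableAt
  -- u'' ≤ (-ν) u on [0,∞)
  have hu''le : ∀ t ≥ (0 : ℝ), deriv (deriv u) t ≤ (-ν) * u t := by
    intro t ht
    rw [(hu''der t).deriv]
    have hode := hφode t ht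
    have hH := hHle t ht
    simp only [hHdef] at hH
    have hexp := (Real.exp_pos (η * t)).le
    have key : η ^ 2 * (F t - φ t) + 2 * η * (deriv F t - deriv φ t)
        + (iteratedDeriv 2 F t - iteratedDeriv 2 φ t) ≤ (-ν) * (F t - φ t) := by
      linarith
    have := mul_le_mul_of_nonneg_left key hexp
    simp only [hudef]
    nlinarith [this]
  set s : ℝ := Real.sqrt (-ν) with hsdef
  have hs2 : s ^ 2 = -ν := Real.sq_sqrt (by linarith)
  have hs0 : 0 ≤ s := Real.sqrt_nonneg _
  -- w := u' - s u satisfies w' ≤ -s w, w 0 = 0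
  set w : ℝ → ℝ := fun t => deriv u t - s * u t with hwdef
  have hwd : Differentiable ℝ w := hu'd.sub (hud.const_mul s)
  have hw0 : w 0 = 0 := by
    simp only [hwdef, hudef]
    rw [hu'eq 0]
    simp [hφ0, hφ'0]
  have hwle : ∀ t ≥ (0 : ℝ), w t ≤ 0 := by
    apply gron_aux w (-s) hwd (le_of_eq hw0)
    intro t ht
    have hdw : deriv w t = deriv (deriv u) t - s * deriv u t := by
      simp only [hwdef]
      rw [deriv_fun_sub (hu'd t) ((hud.const_mul s) t), deriv_const_mul s (hud t)]
    rw [hdw]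
    have h2 : deriv (deriv u) t ≤ s ^ 2 * u t := by
      rw [hs2]; exact hu''le t ht
    simp only [hwdef]
    nlinarith [h2]
  -- u' ≤ s u, u 0 = 0 ⇒ u ≤ 0
  have hu0 : u 0 = 0 := by simp [hudef, hφ0]
  have hule : ∀ t ≥ (0 : ℝ), u t ≤ 0 := by
    apply gron_aux u s hud (le_of_eq hu0)
    intro t ht
    have := hwle t ht
    simp only [hwdef] at this
    linarith
  intro t ht
  have := hule t ht
  simp only [hudef] at this
  nlinarith [Real.exp_pos (η * t)]
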